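/- Under the assumptions that F is an atomless CDF on [x_l, x_h] with strictly positive differentiable density, u is twice continuously differentiable, concave, strictly increasing with u' > 0, and π_F(·|x_D) is strictly quasiconcave, the unique maximizer m(x_D) of π_F(p | x_D) = u(x_D - p)F(2p) + u(p)(1 - F(2p)) satisfies: x_D < 2m(x_D) < μ_F if x_D < μ_F; x_D = 2m(x_D) = μ_F if x_D = μ_F; and x_D > 2m(x_D) > μ_F if x_D > μ_F, where μ_F is the median of F. -/
import Mathlib

open Set Filter Topology

lemma aux_exists_gt_of_deriv_pos (g : ℝ → ℝ) {a b c : ℝ} (hab : a < b)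
    (hg : HasDerivAt g c a) (hc : 0 < c) : ∃ q, a < q ∧ q < b ∧ g a < g q := by
  have h := hasDerivAt_iff_tendsto_slope.1 hg
  have hev : ∀ᶠ y in 𝓝[≠] a, 0 < slope g a y := h.eventually (lt_mem_nhds hc)
  have hle : 𝓝[>] a ≤ 𝓝[≠] a :=
    nhdsWithin_mono a (fun y hy => ne_of_gt hy)
  have hev' : ∀ᶠ y in 𝓝[>] a, 0 < slope g a y := hev.filter_mono hle
  have hio : Ioo a b ∈ 𝓝[>] a := Ioo_mem_nhdsGT_of_mem ⟨le_refl a, hab⟩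
  obtain ⟨q, hq1, hq2⟩ := (hev'.and (eventually_of_mem hio (fun y hy => hy))).exists
  refine ⟨q, hq2.1, hq2.2, ?_⟩
  have hs : 0 < (g q - g a) / (q - a) := by
    rw [slope_def_field] at hq1; exact hq1
  have hqa : 0 < q - a := sub_pos.2 hq2.1
  nlinarith [mul_pos hs hqa, div_mul_cancel₀ (g q - g a) (ne_of_gt hqa)]

lemma aux_exists_lt_of_deriv_neg (g : ℝ → ℝ) {a b c : ℝ} (hba : b < a)
    (hg : HasDerivAt g c a) (hc : c < 0) : ∃ q, b < q ∧ q < a ∧ g a < g q := by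
  have h := hasDerivAt_iff_tendsto_slope.1 hg
  have hev : ∀ᶠ y in 𝓝[≠] a, slope g a y < 0 := h.eventually (gt_mem_nhds hc)
  have hle : 𝓝[<] a ≤ 𝓝[≠] a :=
    nhdsWithin_mono a (fun y hy => ne_of_lt hy)
  have hev' : ∀ᶠ y in 𝓝[<] a, slope g a y < 0 := hev.filter_mono hle
  have hio : Ioo b a ∈ 𝓝[<] a := Ioo_mem_nhdsLT_of_mem ⟨hba, le_refl a⟩
  obtain ⟨q, hq1, hq2⟩ := (hev'.and (eventually_of_mem hio (fun y hy => hy))).exists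
  refine ⟨q, hq2.1, hq2.2, ?_⟩
  have hs : (g q - g a) / (q - a) < 0 := by
    rw [slope_def_field] at hq1; exact hq1
  have hqa : q - a < 0 := sub_neg.2 hq2.2
  nlinarith [mul_pos_of_neg_of_neg hs hqa, div_mul_cancel₀ (g q - g a) (ne_of_lt hqa)]

/-- In the Bayesian Texas Shoot-Out, the unique maximizer `m` of the divider's
payoff satisfies `x_D < 2m < μ_F`, `x_D = 2m = μ_F`, or `x_D > 2m > μ_F` according to whether
`x_D` is below, at, or above the median `μ_F` of `F`. -/
theorem optimal_price_vs_median (xl xh : ℝ) (hx : xl < xh) (F f u : ℝ → ℝ)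
    (hfpos : ∀ x ∈ Icc xl xh, 0 < f x)
    (hfdiff : DifferentiableOn ℝ f (Icc xl xh))
    (hF : ∀ x ∈ Icc xl xh, HasDerivAt F (f x) x)
    (hF0 : F xl = 0) (hF1 : F xh = 1) (hFmono : MonotoneOn F (Icc xl xh))
    (hu : ContDiff ℝ 2 u) (huconc : ConcaveOn ℝ univ u) (hum : StrictMono u)
    (hu' : ∀ x, 0 < deriv u x)
    (xD : ℝ) (hxD : xD ∈ Icc xl xh)
    (hqc : ∀ p, 2 * p ∈ Icc xl xh → ∀ q, 2 * q ∈ Icc xl xh → p < q → ∀ l ∈ Ioo (0:ℝ) 1,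
      min (u (xD - p) * F (2 * p) + u p * (1 - F (2 * p)))
          (u (xD - q) * F (2 * q) + u q * (1 - F (2 * q))) <
        u (xD - (l * p + (1 - l) * q)) * F (2 * (l * p + (1 - l) * q)) +
          u (l * p + (1 - l) * q) * (1 - F (2 * (l * p + (1 - l) * q))))
    (μ : ℝ) (hμmem : μ ∈ Icc xl xh) (hμ : F μ = 1/2)
    (m : ℝ) (hmdom : 2 * m ∈ Icc xl xh)
    (hm : ∀ p, 2 * p ∈ Icc xl xh →
      u (xD - p) * F (2 * p) + u p * (1 - F (2 * p)) ≤
        u (xD - m) * F (2 * m) + u m * (1 - F (2 * m))) :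
    (xD < μ → xD < 2 * m ∧ 2 * m < μ) ∧
    (xD = μ → 2 * m = μ) ∧
    (μ < xD → μ < 2 * m ∧ 2 * m < xD) := by
  have hud : Differentiable ℝ u := hu.differentiable (by norm_num)
  -- F is strictly monotone on Icc
  have hFc : ContinuousOn F (Icc xl xh) := fun x hx' => (hF x hx').continuousAt.continuousWithinAt
  have hFs : StrictMonoOn F (Icc xl xh) := by
    apply strictMonoOn_of_deriv_pos (convex_Icc _ _) hFc
    intro x hx'
    rw [interior_Icc] at hx'
    rw [(hF x (Ioo_subset_Icc_self hx')).deriv]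
    exact hfpos x (Ioo_subset_Icc_self hx')
  -- deriv u is antitone
  have hu'anti : ∀ a b : ℝ, a ≤ b → deriv u b ≤ deriv u a := by
    intro a b hab
    exact huconc.antitoneOn_deriv (fun x _ => hud x) (mem_univ a) (mem_univ b) hab
  set P : ℝ → ℝ := fun p => u (xD - p) * F (2 * p) + u p * (1 - F (2 * p)) with hPdef
  have hmP : ∀ p, 2 * p ∈ Icc xl xh → P p ≤ P m := hm
  have hqcP : ∀ p, 2 * p ∈ Icc xl xh → ∀ q, 2 * q ∈ Icc xl xh → p < q → ∀ l ∈ Ioo (0:ℝ) 1,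
      min (P p) (P q) < P (l * p + (1 - l) * q) := hqc
  -- derivative of P
  have hPd : ∀ a : ℝ, 2 * a ∈ Icc xl xh → HasDerivAt P
      (deriv u (xD - a) * (-1) * F (2 * a) + u (xD - a) * (f (2 * a) * 2)
        + (deriv u a * (1 - F (2 * a)) + u a * (-(f (2 * a) * 2)))) a := by
    intro a ha
    have h1 : HasDerivAt (fun p : ℝ => xD - p) (-1) a := (hasDerivAt_id a).const_sub xD
    have h2 : HasDerivAt (fun p : ℝ => u (xD - p)) (deriv u (xD - a) * -1) a :=
      ((hud (xD - a)).hasDerivAt).comp a h1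
    have h3 : HasDerivAt (fun p : ℝ => 2 * p) 2 a := by
      simpa using (hasDerivAt_id a).const_mul (2 : ℝ)
    have h4 : HasDerivAt (fun p : ℝ => F (2 * p)) (f (2 * a) * 2) a := (hF _ ha).comp a h3
    have h6 : HasDerivAt u (deriv u a) a := (hud a).hasDerivAt
    have h7 : HasDerivAt (fun p : ℝ => 1 - F (2 * p)) (-(f (2 * a) * 2)) a := h4.const_sub 1
    exact (h2.mul h4).add (h6.mul h7)
  -- generic "move right" lemma
  have keyR : ∀ a q : ℝ, 2 * a ∈ Icc xl xh → 2 * q ∈ Icc xl xh → a < q → P a < P q → a < m := by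
    intro a q ha hq haq hPq
    by_contra hcon
    push_neg at hcon
    rcases eq_or_lt_of_le hcon with he | hlt
    · exact absurd (hmP q hq) (by rw [he]; linarith)
    · have hl0 : 0 < q - a := by linarith
      have hl1 : q - a < q - m := by linarith
      have hne' : q - m ≠ 0 := by linarith
      have hl : (q - a) / (q - m) ∈ Ioo (0:ℝ) 1 := by
        constructor
        · exact div_pos hl0 (by linarith)
        · rw [div_lt_one (by linarith)]; exact hl1
      have heq : (q - a) / (q - m) * m + (1 - (q - a) / (q - m)) * q = a := by
        field_simp
        ring
      have := hqcP m hmdom q hq (by linarith) _ hl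
      rw [heq] at this
      have hqm : P q ≤ P m := hmP q hq
      rcases min_cases (P m) (P q) with ⟨h', _⟩ | ⟨h', _⟩ <;> rw [h'] at this <;> linarith
  have keyL : ∀ a q : ℝ, 2 * a ∈ Icc xl xh → 2 * q ∈ Icc xl xh → q < a → P a < P q → m < a := by
    intro a q ha hq hqa hPq
    by_contra hcon
    push_neg at hcon
    rcases eq_or_lt_of_le hcon with he | hlt
    · exact absurd (hmP q hq) (by rw [← he]; linarith)
    · have hl0 : 0 < m - a := by linarith
      have hl1 : m - a < m - q := by linarith
      have hne' : m - q ≠ 0 := by linarith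
      have hl : (m - a) / (m - q) ∈ Ioo (0:ℝ) 1 := by
        constructor
        · exact div_pos hl0 (by linarith)
        · rw [div_lt_one (by linarith)]; exact hl1
      have heq : (m - a) / (m - q) * q + (1 - (m - a) / (m - q)) * m = a := by
        field_simp
        ring
      have := hqcP q hq m hmdom (by linarith) _ hl
      rw [heq] at this
      have hqm : P q ≤ P m := hmP q hq
      rcases min_cases (P q) (P m) with ⟨h', _⟩ | ⟨h', _⟩ <;> rw [h'] at this <;> linarith
  have hxD2 : 2 * (xD / 2) = xD := by ring
  have hμ2 : 2 * (μ / 2) = μ := by ring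
  have hxDdom : 2 * (xD / 2) ∈ Icc xl xh := by rw [hxD2]; exact hxD
  have hμdom : 2 * (μ / 2) ∈ Icc xl xh := by rw [hμ2]; exact hμmem
  refine ⟨?_, ?_, ?_⟩
  · -- xD < μ
    intro hlt
    have hFxD : F xD < 1/2 := by rw [← hμ]; exact hFs hxD hμmem hlt
    constructor
    · -- xD < 2m : derivative at xD/2 positive
      have hd := hPd (xD / 2) hxDdom
      rw [hxD2] at hd
      rw [show xD - xD / 2 = xD / 2 by ring] at hd
      have hDpos : 0 < deriv u (xD / 2) * (-1) * F xD + u (xD / 2) * (f xD * 2)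
          + (deriv u (xD / 2) * (1 - F xD) + u (xD / 2) * (-(f xD * 2))) := by
        nlinarith [hu' (xD / 2)]
      obtain ⟨q, hq1, hq2, hq3⟩ := aux_exists_gt_of_deriv_pos P
        (show xD / 2 < xh / 2 by cases hμmem with | intro h1 h2 => linarith) hd hDpos
      have hqdom : 2 * q ∈ Icc xl xh := ⟨by cases hxD with | intro h1 h2 => linarith, by linarith⟩
      have := keyR (xD / 2) q hxDdom hqdom hq1 hq3
      linarith
    · -- 2m < μ : derivative at μ/2 negative
      have hd := hPd (μ / 2) hμdom
      rw [hμ2, hμ] at hd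
      have h1 : u (xD - μ / 2) < u (μ / 2) := hum (by linarith)
      have h2 : deriv u (μ / 2) ≤ deriv u (xD - μ / 2) := hu'anti _ _ (by linarith)
      have h3 : 0 < f μ := hfpos μ hμmem
      have hDneg : deriv u (xD - μ / 2) * (-1) * (1/2) + u (xD - μ / 2) * (f μ * 2)
          + (deriv u (μ / 2) * (1 - 1/2) + u (μ / 2) * (-(f μ * 2))) < 0 := by
        nlinarith
      obtain ⟨q, hq1, hq2, hq3⟩ := aux_exists_lt_of_deriv_neg P
        (show xD / 2 < μ / 2 by linarith) hd hDneg
      have hqdom : 2 * q ∈ Icc xl xh := ⟨by cases hxD with | intro h1 h2 => linarith,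
        by cases hμmem with | intro h1 h2 => linarith⟩
      have := keyL (μ / 2) q hμdom hqdom hq2 hq3
      linarith
  · -- xD = μ
    intro heq
    by_contra hne
    have hmne : m ≠ xD / 2 := by
      intro h; apply hne; rw [h, hxD2, heq]
    have hFxD : F xD = 1/2 := by rw [heq]; exact hμ
    have hPxD : P (xD / 2) = u (xD / 2) := by
      simp only [hPdef]
      rw [hxD2, show xD - xD / 2 = xD / 2 by ring, hFxD]
      ring
    set t : ℝ := F (2 * m) with ht
    have ht0 : 0 ≤ t := by rw [ht, ← hF0]; exact hFmono ⟨le_refl _, le_of_lt hx⟩ hmdom hmdom.1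
    have ht1 : t ≤ 1 := by rw [ht, ← hF1]; exact hFmono hmdom ⟨le_of_lt hx, le_refl _⟩ hmdom.2
    have hconc : t * u (xD - m) + (1 - t) * u m ≤ u (t * (xD - m) + (1 - t) * m) := by
      have h2 : t • u (xD - m) + (1 - t) • u m ≤ u (t • (xD - m) + (1 - t) • m) :=
        huconc.2 (mem_univ (xD - m)) (mem_univ m) ht0 (by linarith) (by ring)
      simpa [smul_eq_mul] using h2
    have harg : t * (xD - m) + (1 - t) * m < xD / 2 := by
      rcases lt_or_gt_of_ne hmne with hlt | hgt
      · have : t < 1/2 := by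
          rw [ht, ← hFxD]
          exact hFs hmdom hxD (by linarith)
        nlinarith
      · have : 1/2 < t := by
          rw [ht, ← hFxD]
          exact hFs hxD hmdom (by linarith)
        nlinarith
    have hPm : P m ≤ u (t * (xD - m) + (1 - t) * m) := by
      calc P m = t * u (xD - m) + (1 - t) * u m := by simp only [hPdef]; ring
        _ ≤ _ := hconc
    have : P m < P (xD / 2) := by
      rw [hPxD]
      exact lt_of_le_of_lt hPm (hum harg)
    exact absurd (hmP (xD / 2) hxDdom) (by linarith)
  · -- μ < xD
    intro hlt
    have hFxD : 1/2 < F xD := by rw [← hμ]; exact hFs hμmem hxD hlt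
    constructor
    · -- μ < 2m : derivative at μ/2 positive
      have hd := hPd (μ / 2) hμdom
      rw [hμ2, hμ] at hd
      have h1 : u (μ / 2) < u (xD - μ / 2) := hum (by linarith)
      have h2 : deriv u (xD - μ / 2) ≤ deriv u (μ / 2) := hu'anti _ _ (by linarith)
      have h3 : 0 < f μ := hfpos μ hμmem
      have hDpos : 0 < deriv u (xD - μ / 2) * (-1) * (1/2) + u (xD - μ / 2) * (f μ * 2)
          + (deriv u (μ / 2) * (1 - 1/2) + u (μ / 2) * (-(f μ * 2))) := by
        nlinarith
      obtain ⟨q, hq1, hq2, hq3⟩ := aux_exists_gt_of_deriv_pos P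
        (show μ / 2 < xD / 2 by linarith) hd hDpos
      have hqdom : 2 * q ∈ Icc xl xh := ⟨by cases hμmem with | intro h1 h2 => linarith,
        by cases hxD with | intro h1 h2 => linarith⟩
      have := keyR (μ / 2) q hμdom hqdom hq1 hq3
      linarith
    · -- 2m < xD : derivative at xD/2 negative
      have hd := hPd (xD / 2) hxDdom
      rw [hxD2] at hd
      rw [show xD - xD / 2 = xD / 2 by ring] at hd
      have hDneg : deriv u (xD / 2) * (-1) * F xD + u (xD / 2) * (f xD * 2)
          + (deriv u (xD / 2) * (1 - F xD) + u (xD / 2) * (-(f xD * 2))) < 0 := by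
        nlinarith [hu' (xD / 2)]
      obtain ⟨q, hq1, hq2, hq3⟩ := aux_exists_lt_of_deriv_neg P
        (show xl / 2 < xD / 2 by cases hμmem with | intro h1 h2 => linarith) hd hDneg
      have hqdom : 2 * q ∈ Icc xl xh := ⟨by linarith, by cases hxD with | intro h1 h2 => linarith⟩
      have := keyL (xD / 2) q hxDdom hqdom hq2 hq3
      linarith
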